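/- Let 0 ≤ u ≤ v be integers and define Y(u, v) := [0, u] ∪ [v − u, v] ⊆ ℤ. Then for every natural number j ≥ 1, the j-fold sumset satisfies jY(u, v) = ⋃_{ℓ=0}^{j} [ℓ(v − u), ℓ(v − u) + ju]. -/

import Mathlib

open Pointwise

/-- `Y u v = [0, u] ∪ [v − u, v] ⊆ ℤ`. -/
noncomputable def Y (u v : ℤ) : Finset ℤ := Finset.Icc 0 u ∪ Finset.Icc (v - u) v

/-- For integers `0 ≤ u ≤ v` and every `j ≥ 1`, the `j`-fold sumset satisfies
`jY(u,v) = ⋃_{ℓ=0}^{j} [ℓ(v−u), ℓ(v−u) + ju]`. -/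
theorem jfold_sumset_Y (u v : ℤ) (hu : 0 ≤ u) (huv : u ≤ v) (j : ℕ) (hj : 1 ≤ j) :
    j • Y u v =
      (Finset.range (j + 1)).biUnion fun ℓ =>
        Finset.Icc ((ℓ : ℤ) * (v - u)) ((ℓ : ℤ) * (v - u) + (j : ℤ) * u) := by
  induction j with
  | zero => omega
  | succ j ih =>
    rcases Nat.lt_or_ge j 1 with h1 | h1
    · have hj0 : j = 0 := by omega
      subst hj0
      rw [show (0:ℕ)+1 = 1 from rfl, one_nsmul]
      ext x
      simp only [Y, Finset.mem_union, Finset.mem_Icc, Finset.mem_biUnion,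
        Finset.mem_range]
      constructor
      · rintro (h | h)
        · exact ⟨0, by omega, by push_cast; omega⟩
        · exact ⟨1, by omega, by push_cast; omega⟩
      · rintro ⟨ℓ, hℓ, h⟩
        interval_cases ℓ <;> push_cast at h <;> omega
    · rw [succ_nsmul, ih h1]
      ext x
      simp only [Finset.mem_add, Finset.mem_biUnion, Finset.mem_range, Finset.mem_Icc, Y,
        Finset.mem_union]
      have hQ : 0 ≤ (j : ℤ) * u := by positivity
      constructor
      · rintro ⟨y, ⟨ℓ, hℓ, hy1, hy2⟩, b, hb, rfl⟩
        rcases hb with ⟨hb1, hb2⟩ | ⟨hb1, hb2⟩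
        · refine ⟨ℓ, by omega, ?_, ?_⟩ <;> push_cast <;> linarith
        · refine ⟨ℓ + 1, by omega, ?_, ?_⟩ <;> push_cast <;>
            · have hx : ((ℓ : ℤ) + 1) * (v - u) = (ℓ : ℤ) * (v - u) + (v - u) := by ring
              linarith
      · rintro ⟨ℓ, hℓ, hx1, hx2⟩
        have e2 : ((j : ℤ) + 1) * u = (j : ℤ) * u + u := by ring
        rcases Nat.lt_or_ge ℓ (j + 1) with hc | hc
        · -- use b = min u (x - ℓ(v-u)) from [0,u]
          refine ⟨x - min u (x - (ℓ : ℤ) * (v - u)), ⟨ℓ, by omega, ?_, ?_⟩,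
            min u (x - (ℓ : ℤ) * (v - u)), Or.inl ⟨?_, ?_⟩, by ring⟩ <;>
            push_cast at hx2 ⊢ <;> omega
        · -- ℓ = j + 1
          have hc' : ℓ = j + 1 := by omega
          subst hc'
          push_cast at hx1 hx2
          have e1 : ((j : ℤ) + 1) * (v - u) = (j : ℤ) * (v - u) + (v - u) := by ring
          refine ⟨x - max (v - u) (x - ((j : ℤ) * (v - u) + (j : ℤ) * u)),
            ⟨j, by omega, ?_, ?_⟩,
            max (v - u) (x - ((j : ℤ) * (v - u) + (j : ℤ) * u)), Or.inr ⟨?_, ?_⟩, by ring⟩ <;>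
            omega
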